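/- arXiv:2211.09509 — 5 statements merged into one kernel-verified Lean document; each statement's English description precedes it below -/
import Mathlib

section
/- Let N ≥ 1, let χ be a Dirichlet character modulo N with conductor f, let c be a positive divisor of N and set d = gcd(c, N/c), so that d² ∣ N and 1 + a·(N/d) is a unit modulo N for every integer a. Then the following are equivalent: (i) f divides N/d; (ii) χ(1 + a·(N/d)) = 1 for every integer a; (iii) χ(1 + a·(N/d)) = 1 for some integer a with gcd(a, d) = 1. -/
open DirichletCharacter

private lemma aux_pow_one_add {R : Type*} [CommRing R] {e : R} (he : e * e = 0)
    (z : R) (k : ℕ) : (1 + z * e) ^ k = 1 + (k : R) * z * e := by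
  induction k with
  | zero => simp
  | succ k ih =>
    rw [pow_succ, ih]
    push_cast
    linear_combination ((k : R) * z * z) * he

private lemma aux_ker_val {n m : ℕ} [NeZero n] (hm : m ∣ n) (u : (ZMod n)ˣ)
    (hu : ZMod.unitsMap hm u = 1) :
    ∃ t : ℤ, (((u : ZMod n).val : ℤ)) = 1 + t * m := by
  have h0 : ZMod.castHom hm (ZMod m) (u : ZMod n) = (((u : ZMod n).val : ℤ) : ZMod m) := by simp
  rw [← Units.val_inj, Units.val_one, ZMod.unitsMap_def, Units.coe_map] at hu
  rw [MonoidHom.coe_coe, h0] at hu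
  have h1 : (((u : ZMod n).val : ℤ) : ZMod m) = ((1 : ℤ) : ZMod m) := by
    rw [hu]; norm_num
  rw [ZMod.intCast_eq_intCast_iff_dvd_sub] at h1
  obtain ⟨t, ht⟩ := h1
  exact ⟨-t, by linear_combination -ht⟩

private lemma aux_factorsThrough_gcd {n : ℕ} [NeZero n] {χ : DirichletCharacter ℂ n}
    {m₁ m₂ : ℕ} (h₁ : χ.FactorsThrough m₁) (h₂ : χ.FactorsThrough m₂) :
    χ.FactorsThrough (Nat.gcd m₁ m₂) := by
  have hm₁ : m₁ ∣ n := h₁.dvd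
  have hm₂ : m₂ ∣ n := h₂.dvd
  have h1L : m₁ ∣ Nat.lcm m₁ m₂ := Nat.dvd_lcm_left _ _
  have h2L : m₂ ∣ Nat.lcm m₁ m₂ := Nat.dvd_lcm_right _ _
  have hLn : Nat.lcm m₁ m₂ ∣ n := Nat.lcm_dvd hm₁ hm₂
  have hLne : NeZero (Nat.lcm m₁ m₂) :=
    ⟨fun h => NeZero.ne n (by simpa [h] using zero_dvd_iff.mp (h ▸ hLn))⟩
  have hg : Nat.gcd m₁ m₂ ∣ n := (Nat.gcd_dvd_left _ _).trans hm₁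
  rw [factorsThrough_iff_ker_unitsMap hg]
  rw [factorsThrough_iff_ker_unitsMap (dvd_trans h1L hLn)] at h₁
  rw [factorsThrough_iff_ker_unitsMap (dvd_trans h2L hLn)] at h₂
  intro u hu
  obtain ⟨t, ht⟩ := aux_ker_val hg u hu
  set U : ℤ := ((u : ZMod n).val : ℤ) with hUdef
  -- Bezout
  have hbez : (Nat.gcd m₁ m₂ : ℤ) = m₁ * Int.gcdA m₁ m₂ + m₂ * Int.gcdB m₁ m₂ := by
    have := Int.gcd_eq_gcd_ab (m₁ : ℤ) (m₂ : ℤ)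
    rwa [Int.gcd_natCast_natCast] at this
  set x : ℤ := t * Int.gcdA m₁ m₂
  set y : ℤ := t * Int.gcdB m₁ m₂
  have hU : U = 1 + m₁ * x + m₂ * y := by
    rw [ht, hbez]; try ring
  set V : ℤ := 1 + m₁ * x with hVdef
  have hcop1 : IsCoprime V (m₁ : ℤ) := ⟨1, -x, by ring⟩
  have hcopU : IsCoprime U (n : ℤ) := by
    rw [hUdef, Nat.isCoprime_iff_coprime]
    exact ZMod.val_coe_unit_coprime u
  have hcop2 : IsCoprime V (m₂ : ℤ) := by
    have : IsCoprime (V + (m₂ : ℤ) * y) (m₂ : ℤ) := by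
      have hVU : V + (m₂ : ℤ) * y = U := by rw [hU]; try ring
      rw [hVU]
      exact hcopU.of_isCoprime_of_dvd_right (Int.natCast_dvd_natCast.mpr hm₂)
    exact this.of_add_mul_left_left
  have hcopL : IsCoprime V ((Nat.lcm m₁ m₂ : ℕ) : ℤ) :=
    (hcop1.mul_right hcop2).of_isCoprime_of_dvd_right
      (by exact_mod_cast Int.natCast_dvd_natCast.mpr (Nat.lcm_dvd_mul m₁ m₂))
  -- V is a unit mod lcm
  have hVu : IsUnit ((V : ℤ) : ZMod (Nat.lcm m₁ m₂)) := by
    obtain ⟨p, q, hpq⟩ := hcopL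
    refine IsUnit.of_mul_eq_one ((p : ℤ) : ZMod (Nat.lcm m₁ m₂)) ?_
    have := congrArg (fun z : ℤ => ((z : ZMod (Nat.lcm m₁ m₂)))) hpq
    push_cast at this ⊢
    rw [ZMod.natCast_self] at this
    linear_combination this
  obtain ⟨v, hv⟩ := ZMod.unitsMap_surjective hLn hVu.unit
  have hv1 : ZMod.unitsMap (dvd_trans h1L hLn) v = 1 := by
    rw [← ZMod.unitsMap_comp h1L hLn, MonoidHom.comp_apply, hv]
    ext
    rw [ZMod.unitsMap_def, Units.coe_map, Units.val_one, MonoidHom.coe_coe]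
    rw [show ((hVu.unit : ZMod (Nat.lcm m₁ m₂))) = ((V : ℤ) : ZMod (Nat.lcm m₁ m₂)) from
      hVu.unit_spec]
    rw [map_intCast, hVdef]
    push_cast
    simp [ZMod.natCast_self]
  have hv2 : ZMod.unitsMap (dvd_trans h2L hLn) u = ZMod.unitsMap (dvd_trans h2L hLn) v := by
    have hL : ZMod.unitsMap (dvd_trans h2L hLn) v = ZMod.unitsMap h2L hVu.unit := by
      rw [← ZMod.unitsMap_comp h2L hLn, MonoidHom.comp_apply, hv]
    rw [hL]
    ext
    rw [ZMod.unitsMap_def, ZMod.unitsMap_def, Units.coe_map, Units.coe_map,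
      MonoidHom.coe_coe, MonoidHom.coe_coe]
    rw [show ((hVu.unit : ZMod (Nat.lcm m₁ m₂))) = ((V : ℤ) : ZMod (Nat.lcm m₁ m₂)) from
      hVu.unit_spec]
    have h0 : ZMod.castHom (dvd_trans h2L hLn) (ZMod m₂) (u : ZMod n)
        = ((U : ℤ) : ZMod m₂) := by simp [hUdef]
    rw [map_intCast, h0]
    rw [ZMod.intCast_eq_intCast_iff_dvd_sub]
    exact ⟨-y, by rw [hU]; try ring⟩
  have hχv : χ.toUnitHom v = 1 := h₁ hv1
  have hw : χ.toUnitHom (u * v⁻¹) = 1 := by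
    apply h₂
    rw [MonoidHom.mem_ker, map_mul, map_inv, hv2, mul_inv_cancel]
  have : χ.toUnitHom u = 1 := by
    have hu' : u = v * (u * v⁻¹) := by rw [mul_comm u v⁻¹, mul_inv_cancel_left]
    rw [hu', map_mul, hχv, hw, one_mul]
  exact this

private lemma aux_conductor_dvd {n : ℕ} [NeZero n] {χ : DirichletCharacter ℂ n}
    {m : ℕ} (h : χ.FactorsThrough m) : χ.conductor ∣ m := by
  have hg : χ.FactorsThrough (Nat.gcd χ.conductor m) :=
    aux_factorsThrough_gcd (factorsThrough_conductor χ) h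
  have h1 : χ.conductor ≤ Nat.gcd χ.conductor m := Nat.sInf_le hg
  have hc0 : 0 < χ.conductor := Nat.pos_of_ne_zero (conductor_ne_zero χ)
  have h2 : Nat.gcd χ.conductor m ≤ χ.conductor :=
    Nat.le_of_dvd hc0 (Nat.gcd_dvd_left _ _)
  have : Nat.gcd χ.conductor m = χ.conductor := le_antisymm h2 h1
  exact this ▸ Nat.gcd_dvd_right _ _

theorem stmt2 (N : ℕ) (hN : 1 ≤ N) (χ : DirichletCharacter ℂ N)
    (c : ℕ) (hc : 0 < c) (hcN : c ∣ N)
    (d : ℕ) (hd : d = Nat.gcd c (N / c)) :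
    d ^ 2 ∣ N ∧
    (∀ a : ℤ, IsUnit (((1 + a * ((N / d : ℕ) : ℤ)) : ℤ) : ZMod N)) ∧
    List.TFAE
      [χ.conductor ∣ N / d,
       ∀ a : ℤ, χ (((1 + a * ((N / d : ℕ) : ℤ)) : ℤ) : ZMod N) = 1,
       ∃ a : ℤ, Int.gcd a d = 1 ∧ χ (((1 + a * ((N / d : ℕ) : ℤ)) : ℤ) : ZMod N) = 1] := by
  have hNe : NeZero N := ⟨by omega⟩
  have hd0 : 0 < d := hd ▸ Nat.gcd_pos_of_pos_left _ hc
  have hdc : d ∣ c := hd ▸ Nat.gcd_dvd_left _ _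
  have hdNc : d ∣ N / c := hd ▸ Nat.gcd_dvd_right _ _
  have hdN : d ∣ N := hdc.trans hcN
  have hd2 : d ^ 2 ∣ N := by
    have : d * d ∣ c * (N / c) := mul_dvd_mul hdc hdNc
    rwa [Nat.mul_div_cancel' hcN, ← pow_two] at this
  obtain ⟨k, hk⟩ := id hd2
  have hMk : N / d = d * k := by
    rw [hk, pow_two, mul_assoc, Nat.mul_div_cancel_left _ hd0]
  have hMN : N / d ∣ N := Nat.div_dvd_of_dvd hdN
  set e : ZMod N := ((N / d : ℕ) : ZMod N) with hedef
  have hNdvd : N ∣ (N / d) * (N / d) := ⟨k, by rw [hMk, hk]; ring⟩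
  have he : e * e = 0 := by
    rw [hedef, ← Nat.cast_mul, ZMod.natCast_eq_zero_iff]
    exact hNdvd
  have hde : (d : ZMod N) * e = 0 := by
    rw [hedef, ← Nat.cast_mul, Nat.mul_div_cancel' hdN, ZMod.natCast_self]
  have hX : ∀ t : ℤ, (((1 + t * ((N / d : ℕ) : ℤ)) : ℤ) : ZMod N) = 1 + (t : ZMod N) * e := by
    intro t
    rw [Int.cast_add, Int.cast_one, Int.cast_mul, Int.cast_natCast]
  have hunit : ∀ a : ℤ, IsUnit (((1 + a * ((N / d : ℕ) : ℤ)) : ℤ) : ZMod N) := by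
    intro a
    refine IsUnit.of_mul_eq_one (1 - (a : ZMod N) * e) ?_
    rw [hX]
    linear_combination (-((a : ZMod N) * (a : ZMod N))) * he
  refine ⟨hd2, hunit, ?_⟩
  tfae_have 1 → 2 := by
    intro h1 a
    have hcd : χ.conductor ∣ N := conductor_dvd_level χ
    set w := (hunit a).unit with hwdef
    have hker : ZMod.unitsMap hcd w = 1 := by
      ext
      rw [ZMod.unitsMap_def, Units.coe_map, Units.val_one, MonoidHom.coe_coe]
      rw [show ((w : ZMod N)) = (((1 + a * ((N / d : ℕ) : ℤ)) : ℤ) : ZMod N) from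
        (hunit a).unit_spec]
      rw [map_intCast, Int.cast_add, Int.cast_one, Int.cast_mul, Int.cast_natCast,
        (ZMod.natCast_eq_zero_iff _ _).mpr h1, mul_zero, add_zero]
    have hmem := (factorsThrough_iff_ker_unitsMap hcd).mp (factorsThrough_conductor χ) hker
    rw [MonoidHom.mem_ker, ← Units.val_inj, MulChar.coe_toUnitHom, Units.val_one] at hmem
    rwa [(hunit a).unit_spec] at hmem
  tfae_have 2 → 3 := by
    intro h2
    exact ⟨1, by simp, h2 1⟩
  tfae_have 3 → 2 := by
    rintro ⟨a, hgcd, ha⟩ b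
    obtain ⟨p, q, hpq⟩ := Int.isCoprime_iff_gcd_eq_one.mpr hgcd
    have hdz : (d : ℤ) ≠ 0 := by exact_mod_cast hd0.ne'
    set s : ℤ := b * p
    set s' : ℕ := (s % d).toNat with hs'def
    have hs'' : (s' : ℤ) = s % d := Int.toNat_of_nonneg (Int.emod_nonneg s hdz)
    set t₀ : ℤ := a * (s / d) + b * q
    have hb : b = a * s' + d * t₀ := by
      have hsd : (d : ℤ) * (s / d) + s % d = s := Int.mul_ediv_add_emod s d
      have : b * (p * a + q * d) = b := by rw [hpq, mul_one]
      calc b = a * (b * p) + d * (b * q) := by linear_combination -this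
        _ = a * ((d : ℤ) * (s / d) + s % d) + d * (b * q) := by rw [hsd]
        _ = a * s' + d * t₀ := by rw [hs'']; ring
    have hbc : ((b : ℤ) : ZMod N) = (a : ZMod N) * (s' : ZMod N) + (d : ZMod N) * (t₀ : ZMod N) := by
      rw [hb]; push_cast; ring
    have hXb : (((1 + b * ((N / d : ℕ) : ℤ)) : ℤ) : ZMod N)
        = ((((1 + a * ((N / d : ℕ) : ℤ)) : ℤ) : ZMod N)) ^ s' := by
      rw [hX, hX, aux_pow_one_add he]
      linear_combination e * hbc + ((t₀ : ZMod N)) * hde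
    rw [hXb, map_pow, ha, one_pow]
  tfae_have 2 → 1 := by
    intro h2
    refine aux_conductor_dvd ?_
    rw [factorsThrough_iff_ker_unitsMap hMN]
    intro u hu
    obtain ⟨t, ht⟩ := aux_ker_val hMN u hu
    have hu' : (u : ZMod N) = (((1 + t * ((N / d : ℕ) : ℤ)) : ℤ) : ZMod N) := by
      have h1 : (((u : ZMod N).val : ℤ) : ZMod N) = (u : ZMod N) := by
        rw [Int.cast_natCast]
        exact ZMod.natCast_rightInverse _
      rw [← h1, ht]
    rw [MonoidHom.mem_ker, ← Units.val_inj, MulChar.coe_toUnitHom, Units.val_one, hu']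
    exact h2 t
  tfae_finish
end

section
/- Let N ≥ 1, let χ be a Dirichlet character modulo N with conductor f, and let c be a positive divisor of N with gcd(c, N/c) = 2. If f does not divide N/2, then χ(1 + a·(N/2)) = −1 for every odd integer a. -/
theorem stmt3 (N : ℕ) (hN : 1 ≤ N) (χ : DirichletCharacter ℂ N)
    (c : ℕ) (hc : 0 < c) (hcN : c ∣ N)
    (h2 : Nat.gcd c (N / c) = 2)
    (hf : ¬ χ.conductor ∣ N / 2) :
    ∀ a : ℤ, Odd a → χ (((1 + a * ((N / 2 : ℕ) : ℤ)) : ℤ) : ZMod N) = -1 := by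
  have hN0 : N ≠ 0 := by omega
  haveI : NeZero N := ⟨hN0⟩
  set M : ℕ := N / 2 with hM
  have h4 : 4 ∣ N := by
    have h2c : 2 ∣ c := h2 ▸ Nat.gcd_dvd_left c (N / c)
    have h2c' : 2 ∣ N / c := h2 ▸ Nat.gcd_dvd_right c (N / c)
    have hcc : c * (N / c) = N := Nat.mul_div_cancel' hcN
    calc (4 : ℕ) = 2 * 2 := rfl
      _ ∣ c * (N / c) := mul_dvd_mul h2c h2c'
      _ = N := hcc
  obtain ⟨Q, hQ⟩ := h4
  have hM2 : M = 2 * Q := by omega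
  have hMM : 2 * M = N := by omega
  have hMdvd : M ∣ N := ⟨2, by omega⟩
  set u : ZMod N := ((1 + M : ℕ) : ZMod N) with hu
  have hMsq : ((M : ℕ) : ZMod N) * ((M : ℕ) : ZMod N) = 0 := by
    have hdvd : N ∣ M * M := ⟨Q, by rw [hM2, hQ]; ring⟩
    rw [← Nat.cast_mul, ZMod.natCast_eq_zero_iff]
    exact hdvd
  have h2M : ((2 * M : ℕ) : ZMod N) = 0 := by
    rw [hMM, ZMod.natCast_self]
  have huu : u * u = 1 := by
    have h : u * u = 1 + ((2 * M : ℕ) : ZMod N) + ((M : ℕ) : ZMod N) * ((M : ℕ) : ZMod N) := by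
      rw [hu]; push_cast; ring
    rw [h, h2M, hMsq]; ring
  have hU : IsUnit u := IsUnit.of_mul_eq_one u huu
  have hchiu2 : χ u * χ u = 1 := by rw [← map_mul, huu, map_one]
  have hne : χ u ≠ 1 := by
    intro h1
    set f : ℕ := χ.conductor with hfdef
    have hfN : f ∣ N := χ.conductor_dvd_level
    have hf0 : f ≠ 0 := χ.conductor_ne_zero
    set g : ℕ := Nat.gcd f M with hg
    have hgM : g ∣ M := Nat.gcd_dvd_right f M
    have hgf : g ∣ f := Nat.gcd_dvd_left f M
    have hgN : g ∣ N := hgM.trans hMdvd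
    have hf2g : f ∣ 2 * g := by
      have h : f ∣ Nat.gcd (2 * f) (2 * M) := Nat.dvd_gcd ⟨2, by ring⟩ (hMM ▸ hfN)
      rwa [Nat.gcd_mul_left] at h
    have hsodd : ¬ (2 ∣ M / g) := by
      intro h
      exact hf (hf2g.trans (by rw [mul_comm]; exact (Nat.dvd_div_iff_mul_dvd hgM).mp h))
    have hMg : M = g * (M / g) := (Nat.mul_div_cancel' hgM).symm
    have hFTc := χ.factorsThrough_conductor
    set χ₀ : DirichletCharacter ℂ f := hFTc.χ₀ with hχ₀
    have hchange : χ = DirichletCharacter.changeLevel hfN χ₀ := hFTc.eq_changeLevel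
    have heval : ∀ z : (ZMod N)ˣ, χ (z : ZMod N)
        = χ₀ ((((z : ZMod N).val : ℤ) : ZMod f)) := by
      intro z
      rw [hchange, DirichletCharacter.changeLevel_eq_cast_of_dvd]
      congr 1
      rw [← ZMod.castHom_apply (h := hfN)]
      conv_lhs => rw [show ((z : ZMod N)) = (((z : ZMod N).val : ℕ) : ZMod N) by
        simp [ZMod.natCast_val, ZMod.cast_id]]
      rw [map_natCast]
      push_cast
      ring
    -- value of χ at u via χ₀
    have hevalu : χ u = χ₀ (((1 + M : ℕ) : ℤ) : ZMod f) := by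
      have h := heval hU.unit
      rw [IsUnit.unit_spec] at h
      rw [h]
      congr 1
      have : ((u.val : ℕ) : ZMod f) = (((1 + M : ℕ) : ℕ) : ZMod f) := by
        rw [show ((u.val : ℕ) : ZMod f) = ZMod.castHom hfN (ZMod f) ((u.val : ℕ) : ZMod N) by
            rw [map_natCast],
          show (((1 + M : ℕ) : ℕ) : ZMod f) = ZMod.castHom hfN (ZMod f) (((1+M : ℕ) : ℕ) : ZMod N) by
            rw [map_natCast]]
        congr 1
        simp [hu, ZMod.natCast_val, ZMod.cast_id]
      push_cast at this ⊢
      exact_mod_cast this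
    -- χ factors through g
    have hFT : χ.FactorsThrough g := by
      rw [DirichletCharacter.factorsThrough_iff_ker_unitsMap hgN]
      intro x hx
      rw [MonoidHom.mem_ker] at hx ⊢
      rw [← Units.val_inj, MulChar.coe_toUnitHom, Units.val_one]
      rw [← Units.val_inj, Units.val_one, ZMod.unitsMap_def, Units.coe_map] at hx
      have hcast : ZMod.castHom hgN (ZMod g) x.val = (((x.val : ZMod N).val : ℤ) : ZMod g) := by
        simp
      rw [MonoidHom.coe_coe, hcast, ← Int.cast_one, eq_comm,
        ZMod.intCast_eq_intCast_iff_dvd_sub] at hx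
      set v : ℤ := (((x : (ZMod N)ˣ) : ZMod N).val : ℤ) with hv
      obtain ⟨t, ht⟩ := hx
      have hsM : (M : ℤ) = (g : ℤ) * ((M / g : ℕ) : ℤ) := by exact_mod_cast hMg
      rcases Int.even_or_odd t with ⟨r, hr⟩ | ⟨r, hr⟩
      · -- t even : x ≡ 1 mod f
        obtain ⟨w, hw⟩ := hf2g
        have hfw : (2 : ℤ) * g = f * w := by exact_mod_cast hw
        have hfd : (f : ℤ) ∣ v - 1 := ⟨w * r, by linear_combination ht + (g:ℤ) * hr + r * hfw⟩
        rw [heval x]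
        have hv1 : ((v : ℤ) : ZMod f) = ((1 : ℤ) : ZMod f) := by
          rw [ZMod.intCast_eq_intCast_iff_dvd_sub]
          exact dvd_sub_comm.mp hfd
        rw [show (((((x : (ZMod N)ˣ) : ZMod N)).val : ℤ) : ZMod f) = ((1 : ℤ) : ZMod f) from hv1]
        simpa using map_one χ₀
      · -- t odd : x ≡ 1 + M mod f
        obtain ⟨w, hw⟩ := hf2g
        have hfw : (2 : ℤ) * g = f * w := by exact_mod_cast hw
        obtain ⟨s', hs'⟩ : Odd (M / g) := Nat.odd_iff.mpr (by omega)
        have hs'c : ((M / g : ℕ) : ℤ) = 2 * (s' : ℤ) + 1 := by exact_mod_cast hs'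
        have hfd : (f : ℤ) ∣ ((1 + M : ℕ) : ℤ) - v := by
          refine ⟨w * ((s' : ℤ) - r), ?_⟩
          push_cast
          linear_combination -ht - (g:ℤ) * hr + hsM + (g:ℤ) * hs'c + ((s':ℤ) - r) * hfw
        have hv1 : ((v : ℤ) : ZMod f) = (((1 + M : ℕ) : ℤ) : ZMod f) := by
          rw [ZMod.intCast_eq_intCast_iff_dvd_sub]
          exact hfd
        rw [heval x]
        rw [show (((((x : (ZMod N)ˣ) : ZMod N)).val : ℤ) : ZMod f) = (((1 + M : ℕ) : ℤ) : ZMod f) from hv1]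
        rw [← hevalu]
        exact h1
    have hle : f ≤ g := Nat.sInf_le hFT
    have hglt : g < f := by
      refine lt_of_le_of_ne (Nat.le_of_dvd (Nat.pos_of_ne_zero hf0) hgf) ?_
      intro h
      exact hf (h ▸ hgM)
    omega
  have hval : χ u = -1 := (mul_self_eq_one_iff.mp hchiu2).resolve_left hne
  intro a ha
  obtain ⟨k, hk⟩ := ha
  have key : ((1 + a * ((M : ℕ) : ℤ) : ℤ) : ZMod N) = u := by
    have h0 : ((N : ℕ) : ZMod N) = 0 := ZMod.natCast_self N
    rw [hk, hu]
    push_cast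
    rw [show ((1:ZMod N) + (2 * (k:ZMod N) + 1) * (M:ZMod N)) = 1 + (M:ZMod N) + (k:ZMod N) * (2 * (M:ZMod N)) by ring]
    rw [show (2 * (M:ZMod N)) = ((2*M : ℕ) : ZMod N) by push_cast; ring, hMM, h0]
    ring
  rw [key, hval]
end

section
/- Let N ≥ 1, let χ be a Dirichlet character modulo N with conductor f, let c be a positive divisor of N and set d = gcd(c, N/c). For each unit a ∈ (ℤ/dℤ)ˣ, the value χ(1 + ã·(N/d)) (for any integer lift ã of a) is well defined and is a root of unity, so there is a unique rational number μ′_a ∈ [0,1) with e^{2πi μ′_a} = χ(1 + ã·(N/d)). Then ∑_{a ∈ (ℤ/dℤ)ˣ} μ′_a = 0 if f divides N/d, and ∑_{a ∈ (ℤ/dℤ)ˣ} μ′_a = φ(d)/2 if f does not divide N/d, where φ is Euler's totient function. -/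
open scoped Real

lemma aux_exp_rat_int {q : ℚ} (h : Complex.exp (2 * Real.pi * Complex.I * (q : ℂ)) = 1) :
    ∃ n : ℤ, q = n := by
  rw [Complex.exp_eq_one_iff] at h
  obtain ⟨n, hn⟩ := h
  refine ⟨n, ?_⟩
  have h2 : (2 * Real.pi * Complex.I : ℂ) ≠ 0 := Complex.two_pi_I_ne_zero
  have : (q : ℂ) = (n : ℂ) := by
    have := hn
    rw [mul_comm (n : ℂ)] at this
    exact mul_left_cancel₀ h2 this
  exact_mod_cast this

lemma aux_exp_rat_eq {q r : ℚ} (h0q : 0 ≤ q) (hq1 : q < 1) (h0r : 0 ≤ r) (hr1 : r < 1)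
    (h : Complex.exp (2 * Real.pi * Complex.I * (q : ℂ)) =
      Complex.exp (2 * Real.pi * Complex.I * (r : ℂ))) : q = r := by
  have h1 : Complex.exp (2 * Real.pi * Complex.I * ((q - r : ℚ) : ℂ)) = 1 := by
    rw [Complex.exp_eq_exp_iff_exp_sub_eq_one] at h
    rw [← h]; congr 1; push_cast; ring
  obtain ⟨n, hn⟩ := aux_exp_rat_int h1
  have hn1 : (n : ℚ) < 1 := by rw [← hn]; linarith
  have hn2 : (-1 : ℚ) < n := by rw [← hn]; linarith
  have : n = 0 := by
    have a1 : n < 1 := by exact_mod_cast hn1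
    have a2 : (-1 : ℤ) < n := by exact_mod_cast hn2
    omega
  have : q - r = 0 := by rw [hn, this]; norm_num
  linarith

/-- The condition that `μ : (ZMod d)ˣ → ℚ` assigns to each unit `a` the number
`μ′_a ∈ [0,1)` with `e^{2πi μ′_a} = χ(1 + ã·(N/d))` for every integer lift `ã` of `a`. -/
def IsMuPrime (N d : ℕ) (χ : DirichletCharacter ℂ N) (μ : (ZMod d)ˣ → ℚ) : Prop :=
  (∀ a : (ZMod d)ˣ, 0 ≤ μ a ∧ μ a < 1) ∧
  ∀ (a : (ZMod d)ˣ) (t : ℤ), (t : ZMod d) = (a : ZMod d) →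
    Complex.exp (2 * Real.pi * Complex.I * (μ a : ℂ)) =
      χ (((1 + t * ((N / d : ℕ) : ℤ)) : ℤ) : ZMod N)

theorem stmt4 (N : ℕ) (hN : 1 ≤ N) (χ : DirichletCharacter ℂ N)
    (c : ℕ) (hc : 0 < c) (hcN : c ∣ N)
    (d : ℕ) [NeZero d] (hd : d = Nat.gcd c (N / c)) :
    (∃! μ : (ZMod d)ˣ → ℚ, IsMuPrime N d χ μ) ∧
    ∀ μ : (ZMod d)ˣ → ℚ, IsMuPrime N d χ μ →
      ((χ.conductor ∣ N / d → ∑ a : (ZMod d)ˣ, μ a = 0) ∧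
       (¬ χ.conductor ∣ N / d → ∑ a : (ZMod d)ˣ, μ a = (Nat.totient d : ℚ) / 2)) := by
  have hNe : N ≠ 0 := by omega
  haveI : NeZero N := ⟨hNe⟩
  have hd0 : d ≠ 0 := NeZero.ne d
  have hdc : d ∣ c := hd ▸ Nat.gcd_dvd_left _ _
  have hdN : d ∣ N := hdc.trans hcN
  have hde : d * (N / d) = N := Nat.mul_div_cancel' hdN
  have hdd : d * d ∣ N := by
    have h2 : d ∣ N / c := hd ▸ Nat.gcd_dvd_right _ _
    have : d * d ∣ c * (N / c) := mul_dvd_mul hdc h2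
    rwa [Nat.mul_div_cancel' hcN] at this
  have hdvd_e : d ∣ N / d := by
    have := hdd
    rw [← hde] at this
    exact (mul_dvd_mul_iff_left hd0).mp this
  -- e0 : image of N/d in ZMod N
  set e0 : ZMod N := ((N / d : ℕ) : ZMod N) with he0
  obtain ⟨k, hk⟩ := hdvd_e
  have he2 : e0 * e0 = 0 := by
    have hnat : (N / d) * (N / d) = k * N := by
      calc (N / d) * (N / d) = (d * k) * (N / d) := by rw [← hk]
      _ = k * (d * (N / d)) := by ring
      _ = k * N := by rw [hde]
    rw [he0, ← Nat.cast_mul, hnat, Nat.cast_mul, ZMod.natCast_self, mul_zero]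
  have hdE : (d : ZMod N) * e0 = 0 := by
    rw [he0, ← Nat.cast_mul, hde, ZMod.natCast_self]
  -- F and z
  set F : ℤ → ZMod N := fun t => 1 + (t : ZMod N) * e0 with hF
  have hFmul : ∀ s t : ℤ, F s * F t = F (s + t) := by
    intro s t
    have : (1 + (s : ZMod N) * e0) * (1 + (t : ZMod N) * e0)
        = 1 + ((s : ZMod N) + t) * e0 + ((s : ZMod N) * t) * (e0 * e0) := by ring
    simp only [hF, this, he2, mul_zero, add_zero]
    push_cast
    ring
  have hFcong : ∀ s t : ℤ, (s : ZMod d) = (t : ZMod d) → F s = F t := by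
    intro s t hst
    have hdvd : (d : ℤ) ∣ s - t := by
      rwa [← ZMod.intCast_zmod_eq_zero_iff_dvd, Int.cast_sub, sub_eq_zero]
    obtain ⟨m, hm⟩ := hdvd
    have hs : s = t + d * m := by linarith [hm]
    have key : ∀ x y : ZMod N, 1 + (x + (d : ZMod N) * y) * e0 = 1 + x * e0 := by
      intro x y
      have h3 : 1 + (x + (d : ZMod N) * y) * e0 = 1 + x * e0 + y * ((d : ZMod N) * e0) := by ring
      rw [h3, hdE, mul_zero, add_zero]
    simp only [hF, hs]
    push_cast
    exact key _ _
  set z : ℤ → ℂ := fun t => χ (F t) with hz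
  have hFint : ∀ t : ℤ, (((1 + t * ((N / d : ℕ) : ℤ)) : ℤ) : ZMod N) = F t := by
    intro t
    simp only [hF, he0]
    rw [Int.cast_add, Int.cast_one, Int.cast_mul, Int.cast_natCast]
  have hzbridge : ∀ t : ℤ, (χ (((1 + t * ((N / d : ℕ) : ℤ)) : ℤ) : ZMod N)) = z t := by
    intro t
    rw [hFint t]
  have hzmul : ∀ s t : ℤ, z s * z t = z (s + t) := by
    intro s t
    rw [hz]
    simp only
    rw [← map_mul, hFmul]
  have hz0 : z 0 = 1 := by
    simp only [hz, hF]
    norm_num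
  have hzinv : ∀ t : ℤ, z t * z (-t) = 1 := by
    intro t
    rw [hzmul, add_neg_cancel, hz0]
  have hzne : ∀ t : ℤ, z t ≠ 0 := by
    intro t h
    have := hzinv t
    rw [h, zero_mul] at this
    exact zero_ne_one this
  have hzpow : ∀ (t : ℤ) (n : ℕ), z t ^ n = z (n * t) := by
    intro t n
    induction n with
    | zero => simpa using hz0.symm
    | succ n ih =>
      rw [pow_succ, ih, hzmul]
      congr 1
      push_cast
      ring
  have hzcong : ∀ s t : ℤ, (s : ZMod d) = (t : ZMod d) → z s = z t := by
    intro s t h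
    show χ (F s) = χ (F t)
    rw [hFcong s t h]
  have hzd : ∀ t : ℤ, z t ^ d = 1 := by
    intro t
    rw [hzpow]
    have h1 : (((d : ℤ) * t : ℤ) : ZMod d) = ((0 : ℤ) : ZMod d) := by
      push_cast
      simp [ZMod.natCast_self]
    rw [show ((d : ℕ) : ℤ) * t = (d : ℤ) * t from rfl, hzcong _ _ h1, hz0]
  -- units F t
  have hF0 : F 0 = 1 := by simp [hF]
  have hvmul : ∀ t : ℤ, F t * F (-t) = 1 := by
    intro t
    rw [hFmul, add_neg_cancel, hF0]
  set v : ℤ → (ZMod N)ˣ := fun t => Units.mkOfMulEqOne (F t) (F (-t)) (hvmul t) with hv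
  have hvcoe : ∀ t : ℤ, ((v t : (ZMod N)ˣ) : ZMod N) = F t := fun t => rfl
  -- integer lifts of units
  set ta : (ZMod d)ˣ → ℤ := fun a => (((a : ZMod d)).val : ℤ) with hta
  have hta_cast : ∀ a : (ZMod d)ˣ, ((ta a : ℤ) : ZMod d) = (a : ZMod d) := by
    intro a
    simp only [hta]
    push_cast
    exact ZMod.natCast_rightInverse _
  -- existence of μ
  have hex : ∀ a : (ZMod d)ˣ, ∃ q : ℚ, (0 ≤ q ∧ q < 1) ∧
      Complex.exp (2 * Real.pi * Complex.I * (q : ℂ)) = z (ta a) := by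
    intro a
    haveI : NeZero d := ⟨hd0⟩
    obtain ⟨i, hid, hi⟩ := (Complex.isPrimitiveRoot_exp d hd0).eq_pow_of_pow_eq_one (hzd (ta a))
    refine ⟨(i : ℚ) / d, ⟨by positivity, ?_⟩, ?_⟩
    · rw [div_lt_one (by exact_mod_cast Nat.pos_of_ne_zero hd0)]
      exact_mod_cast hid
    · rw [← hi, ← Complex.exp_nat_mul]
      congr 1
      have hdC : (d : ℂ) ≠ 0 := Nat.cast_ne_zero.mpr hd0
      push_cast
      field_simp
  choose μ0 hμ0b hμ0e using hex
  have hIs0 : IsMuPrime N d χ μ0 := by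
    refine ⟨hμ0b, fun a t ht => ?_⟩
    rw [hzbridge t, ← hzcong (ta a) t (by rw [hta_cast a, ht])]
    exact hμ0e a
  have hexp_eq : ∀ (μ : (ZMod d)ˣ → ℚ), IsMuPrime N d χ μ → ∀ a,
      Complex.exp (2 * Real.pi * Complex.I * (μ a : ℂ)) = z (ta a) := by
    intro μ hμ a
    rw [hμ.2 a (ta a) (hta_cast a), hzbridge]
  have huniq : ∀ μ, IsMuPrime N d χ μ → μ = μ0 := by
    intro μ hμ
    funext a
    exact aux_exp_rat_eq (hμ.1 a).1 (hμ.1 a).2 (hμ0b a).1 (hμ0b a).2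
      (by rw [hexp_eq μ hμ a, hμ0e a])
  refine ⟨⟨μ0, hIs0, huniq⟩, ?_⟩
  intro μ hμ
  constructor
  · -- conductor divides N/d : all values are 1
    intro hcond
    haveI : NeZero χ.conductor := ⟨χ.conductor_ne_zero⟩
    obtain ⟨hfN, χ₀, hχ⟩ := χ.factorsThrough_conductor
    have hz1 : ∀ t : ℤ, z t = 1 := by
      intro t
      have h1 : z t = χ ((v t : ZMod N)) := rfl
      rw [h1, hχ, DirichletCharacter.changeLevel_eq_cast_of_dvd χ₀ hfN (v t)]
      have h2 : (ZMod.cast ((v t : (ZMod N)ˣ) : ZMod N) : ZMod χ.conductor) = 1 := by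
        have h4 : ∀ y : ZMod N, (ZMod.cast y : ZMod χ.conductor)
            = ZMod.castHom hfN (ZMod χ.conductor) y := fun y => (ZMod.castHom_apply y).symm
        rw [hvcoe, ← hFint t, h4, map_intCast, Int.cast_add, Int.cast_one, Int.cast_mul, Int.cast_natCast,
          (ZMod.natCast_eq_zero_iff _ _).mpr hcond, mul_zero, add_zero]
      rw [h2, map_one]
    apply Finset.sum_eq_zero
    intro a _
    have h3 := hexp_eq μ hμ a
    rw [hz1] at h3
    obtain ⟨n, hn⟩ := aux_exp_rat_int h3
    have hb := hμ.1 a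
    have l1 : (0:ℚ) ≤ n := by rw [← hn]; exact hb.1
    have l2 : (n:ℚ) < 1 := by rw [← hn]; exact hb.2
    have l1' : (0:ℤ) ≤ n := by exact_mod_cast l1
    have l2' : n < 1 := by exact_mod_cast l2
    have : n = 0 := by omega
    rw [hn, this]
    norm_num
  · intro hcond
    -- Step A: there is t with z t ≠ 1
    have hf0 : χ.conductor ≠ 0 := χ.conductor_ne_zero
    haveI : NeZero χ.conductor := ⟨hf0⟩
    have hfN : χ.conductor ∣ N := χ.conductor_dvd_level
    have hznt : ∃ t : ℤ, z t ≠ 1 := by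
      by_contra hcon
      push_neg at hcon
      apply hcond
      set g := Nat.gcd χ.conductor (N / d) with hg
      have hgf : g ∣ χ.conductor := Nat.gcd_dvd_left _ _
      have hge : g ∣ N / d := Nat.gcd_dvd_right _ _
      have hgN : g ∣ N := hgf.trans hfN
      have hg0 : g ≠ 0 := fun h => hf0 (Nat.eq_zero_of_gcd_eq_zero_left (hg ▸ h))
      haveI : NeZero g := ⟨hg0⟩
      have hker : (ZMod.unitsMap hfN).ker ≤ χ.toUnitHom.ker :=
        (DirichletCharacter.factorsThrough_iff_ker_unitsMap hfN).mp χ.factorsThrough_conductor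
      have hFT : χ.FactorsThrough g := by
        rw [DirichletCharacter.factorsThrough_iff_ker_unitsMap hgN]
        intro u hu
        set x : ℤ := (((u : ZMod N)).val : ℤ) with hx
        have hxu : ((x : ℤ) : ZMod N) = (u : ZMod N) := by
          simp only [hx]
          push_cast
          exact ZMod.natCast_rightInverse _
        rw [MonoidHom.mem_ker] at hu
        have hu1 : ((x : ℤ) : ZMod g) = 1 := by
          have h2 := congrArg (Units.val) hu
          rw [ZMod.unitsMap_def, Units.coe_map, Units.val_one] at h2
          rw [← hxu, MonoidHom.coe_coe, map_intCast] at h2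
          exact h2
        have hdvd1 : (g : ℤ) ∣ x - 1 := by
          rw [← ZMod.intCast_zmod_eq_zero_iff_dvd]
          push_cast
          rw [hu1]
          ring
        obtain ⟨kk, hkk⟩ := hdvd1
        have hbez : (g : ℤ) = (χ.conductor : ℤ) * Int.gcdA χ.conductor (N / d)
            + ((N / d : ℕ) : ℤ) * Int.gcdB χ.conductor (N / d) := by
          have hb := Int.gcd_eq_gcd_ab (χ.conductor : ℤ) ((N / d : ℕ) : ℤ)
          rwa [Int.gcd_natCast_natCast] at hb
        set t : ℤ := Int.gcdB χ.conductor (N / d) * kk with htdef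
        have hfd2 : (χ.conductor : ℤ) ∣ x - 1 - t * ((N / d : ℕ) : ℤ) := by
          refine ⟨Int.gcdA χ.conductor (N / d) * kk, ?_⟩
          rw [htdef]
          linear_combination hkk + kk * hbez
        have hmapeq : ZMod.unitsMap hfN u = ZMod.unitsMap hfN (v t) := by
          apply Units.ext
          simp only [ZMod.unitsMap_def, Units.coe_map, MonoidHom.coe_coe]
          rw [← hxu, hvcoe, ← hFint t,
            map_intCast, map_intCast, ← sub_eq_zero, ← Int.cast_sub,
            ZMod.intCast_zmod_eq_zero_iff_dvd]
          convert hfd2 using 1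
          ring
        have hvker : χ.toUnitHom (v t) = 1 := by
          apply Units.ext
          rw [MulChar.coe_toUnitHom, hvcoe, Units.val_one]
          exact hcon t
        have huv : χ.toUnitHom (u * (v t)⁻¹) = 1 := by
          apply hker
          rw [MonoidHom.mem_ker, map_mul, map_inv, hmapeq, mul_inv_cancel]
        rw [MonoidHom.mem_ker]
        have hdec : u = (u * (v t)⁻¹) * (v t) := by group
        rw [hdec, map_mul, huv, hvker, one_mul]
      have hle : χ.conductor ≤ g := Nat.sInf_le ((χ.mem_conductorSet_iff).mpr hFT)
      have hgle : g ≤ χ.conductor := Nat.le_of_dvd (Nat.pos_of_ne_zero hf0) hgf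
      have : g = χ.conductor := le_antisymm hgle hle
      exact this ▸ hge
    -- Step B: z (ta a) ≠ 1 for all units a
    have hzunit : ∀ a : (ZMod d)ˣ, z (ta a) ≠ 1 := by
      intro a hza
      obtain ⟨t₀, ht₀⟩ := hznt
      apply ht₀
      have hz1 : z 1 = 1 := by
        set s : ℕ := ((a⁻¹ : (ZMod d)ˣ) : ZMod d).val with hs
        have hscast : ((s : ℕ) : ZMod d) = ((a⁻¹ : (ZMod d)ˣ) : ZMod d) :=
          ZMod.natCast_rightInverse _
        have hcong : (((s : ℤ) * ta a : ℤ) : ZMod d) = ((1 : ℤ) : ZMod d) := by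
          push_cast
          rw [hscast]
          rw [show ((ta a : ℤ) : ZMod d) = (a : ZMod d) from hta_cast a]
          simp
        have h5 : z 1 = z ((s : ℤ) * ta a) := (hzcong _ _ hcong).symm
        rw [h5, ← hzpow, hza, one_pow]
      have hn := (t₀ : ZMod d).val
      set n : ℕ := ((t₀ : ZMod d)).val with hndef
      have hcong2 : ((t₀ : ℤ) : ZMod d) = (((n : ℤ)) : ZMod d) := by
        push_cast
        rw [hndef]
        exact (ZMod.natCast_rightInverse _).symm
      rw [hzcong _ _ hcong2]
      have : z ((n : ℤ)) = z ((n : ℤ) * 1) := by rw [mul_one]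
      rw [this, ← hzpow, hz1, one_pow]
    -- pairing
    have hpair : ∀ a : (ZMod d)ˣ, μ a + μ (-a) = 1 := by
      intro a
      have h1 : Complex.exp (2 * Real.pi * Complex.I * ((μ a + μ (-a) : ℚ) : ℂ))
          = z (ta a) * z (ta (-a)) := by
        rw [← hexp_eq μ hμ a, ← hexp_eq μ hμ (-a), ← Complex.exp_add]
        congr 1
        push_cast
        ring
      rw [hzmul] at h1
      have h2 : ((ta a + ta (-a) : ℤ) : ZMod d) = ((0 : ℤ) : ZMod d) := by
        push_cast
        rw [show ((ta a : ℤ) : ZMod d) = (a : ZMod d) from hta_cast a,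
          show ((ta (-a) : ℤ) : ZMod d) = ((-a : (ZMod d)ˣ) : ZMod d) from hta_cast (-a),
          Units.val_neg]
        ring
      rw [hzcong _ _ h2, hz0] at h1
      obtain ⟨n, hn⟩ := aux_exp_rat_int h1
      have hb1 := hμ.1 a
      have hb2 := hμ.1 (-a)
      have hμa0 : μ a ≠ 0 := by
        intro h0
        apply hzunit a
        rw [← hexp_eq μ hμ a, h0]
        simp
      have hpos : (0 : ℚ) < μ a := lt_of_le_of_ne hb1.1 (Ne.symm hμa0)
      have l1 : (0 : ℚ) < n := by rw [← hn]; linarith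
      have l2 : (n : ℚ) < 2 := by rw [← hn]; linarith
      have l1' : (0 : ℤ) < n := by exact_mod_cast l1
      have l2' : n < 2 := by exact_mod_cast l2
      have hn1 : n = 1 := by omega
      rw [hn, hn1]
      norm_num
    have hsum2 : ∑ a : (ZMod d)ˣ, μ a = ∑ a : (ZMod d)ˣ, μ (-a) :=
      Fintype.sum_equiv (Equiv.neg _) _ _ (fun a => by simp)
    have hdouble : (∑ a : (ZMod d)ˣ, μ a) + (∑ a : (ZMod d)ˣ, μ a) = (Nat.totient d : ℚ) := by
      calc (∑ a : (ZMod d)ˣ, μ a) + (∑ a : (ZMod d)ˣ, μ a)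
          = ∑ a : (ZMod d)ˣ, (μ a + μ (-a)) := by
            nth_rewrite 2 [hsum2]
            rw [← Finset.sum_add_distrib]
        _ = ∑ _a : (ZMod d)ˣ, (1 : ℚ) := Finset.sum_congr rfl (fun a _ => hpair a)
        _ = (Fintype.card (ZMod d)ˣ : ℚ) := by simp
        _ = (Nat.totient d : ℚ) := by rw [ZMod.card_units_eq_totient]
    linarith
end

section
/- Let N > 1 and let χ be a Dirichlet character modulo N, extended to a homomorphism χ : Γ₀(N) → ℂˣ by χ([[a,b],[c,d]]) = χ(d). Then there exists a group homomorphism χ⁺ : Γ₀⁺(N) → ℂˣ whose restriction to (the image of) Γ₀(N) equals χ if and only if χ² is trivial; and in that case there are exactly two such homomorphisms χ⁺. -/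
open Matrix

/-- The Fricke matrix `W_N = [[0, -1/√N], [√N, 0]]`. -/
noncomputable def frickeMat (N : ℕ) : Matrix (Fin 2) (Fin 2) ℝ :=
  !![0, -1 / Real.sqrt N; Real.sqrt N, 0]

/-- The natural map `SL(2, ℤ) → SL(2, ℝ)`. -/
noncomputable def toSL2R :
    Matrix.SpecialLinearGroup (Fin 2) ℤ →* Matrix.SpecialLinearGroup (Fin 2) ℝ :=
  Matrix.SpecialLinearGroup.map (Int.castRingHom ℝ)

/-- The Fricke group `Γ₀⁺(N)`, the subgroup of `SL(2, ℝ)` generated by the image of `Γ₀(N)`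
and the Fricke involution `W_N`. -/
noncomputable def Gamma0Plus (N : ℕ) : Subgroup (Matrix.SpecialLinearGroup (Fin 2) ℝ) :=
  Subgroup.closure
    ((toSL2R '' (CongruenceSubgroup.Gamma0 N : Set (Matrix.SpecialLinearGroup (Fin 2) ℤ))) ∪
      {g | (g : Matrix (Fin 2) (Fin 2) ℝ) = frickeMat N})

lemma toSL2R_mem_Gamma0Plus (N : ℕ) (γ : CongruenceSubgroup.Gamma0 N) :
    toSL2R (γ : Matrix.SpecialLinearGroup (Fin 2) ℤ) ∈ Gamma0Plus N :=
  Subgroup.subset_closure (Set.mem_union_left _ ⟨γ, γ.2, rfl⟩)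

/-- `χ⁺ : Γ₀⁺(N) → ℂˣ` restricts to (the extension to `Γ₀(N)` of) the Dirichlet character `χ`,
i.e. its value at (the image of) `[[a, b], [c, d]] ∈ Γ₀(N)` is `χ(d)`. -/
def ExtendsPlus (N : ℕ) (χ : DirichletCharacter ℂ N)
    (χplus : Gamma0Plus N →* ℂˣ) : Prop :=
  ∀ γ : CongruenceSubgroup.Gamma0 N,
    (χplus ⟨toSL2R (γ : Matrix.SpecialLinearGroup (Fin 2) ℤ),
        toSL2R_mem_Gamma0Plus N γ⟩ : ℂ) =
      χ ((((γ : Matrix.SpecialLinearGroup (Fin 2) ℤ) 1 1 : ℤ)) : ZMod N)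

namespace Stmt6Aux

open CongruenceSubgroup

lemma toSL2R_coe (A : Matrix.SpecialLinearGroup (Fin 2) ℤ) (i j : Fin 2) :
    (toSL2R A : Matrix (Fin 2) (Fin 2) ℝ) i j = ((A i j : ℤ) : ℝ) := rfl

lemma toSL2R_inj : Function.Injective toSL2R := by
  intro A B h
  ext i j
  have := congrArg (fun M : Matrix.SpecialLinearGroup (Fin 2) ℝ =>
    (M : Matrix (Fin 2) (Fin 2) ℝ) i j) h
  simp only [toSL2R_coe] at this
  exact_mod_cast this

variable {N : ℕ}

/-- The Fricke involution as an element of `SL(2, ℝ)`. -/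
noncomputable def W (hN : 1 < N) : Matrix.SpecialLinearGroup (Fin 2) ℝ :=
  ⟨frickeMat N, by
    have h : Real.sqrt N ≠ 0 := by
      have : (0:ℝ) < N := by exact_mod_cast Nat.pos_of_ne_zero (by omega)
      positivity
    simp [frickeMat, Matrix.det_fin_two_of]
    field_simp⟩
variable (N) in
/-- `-1` as an element of `Γ₀(N)`. -/
def negI : CongruenceSubgroup.Gamma0 N :=
  ⟨⟨!![-1, 0; 0, -1], by simp [Matrix.det_fin_two_of]⟩, by
    refine CongruenceSubgroup.Gamma0_mem.2 ?_
    show (((0 : ℤ)) : ZMod N) = 0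
    simp⟩

lemma negI_coe (i j : Fin 2) :
    ((negI N : Matrix.SpecialLinearGroup (Fin 2) ℤ) : Matrix (Fin 2) (Fin 2) ℤ) i j
      = !![-1, 0; 0, -1] i j := rfl

lemma sqrtN_sq (hN : 1 < N) : Real.sqrt N * Real.sqrt N = (N : ℝ) :=
  Real.mul_self_sqrt (by positivity)

lemma sqrtN_ne (hN : 1 < N) : Real.sqrt N ≠ 0 := by
  have : (0:ℝ) < N := by exact_mod_cast Nat.pos_of_ne_zero (by omega)
  positivity

lemma W_mul_W (hN : 1 < N) : W hN * W hN = toSL2R (negI N) := by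
  apply Subtype.ext
  show (W hN : Matrix (Fin 2) (Fin 2) ℝ) * (W hN : Matrix (Fin 2) (Fin 2) ℝ) = _
  ext i j
  fin_cases i <;> fin_cases j <;>
    simp [W, frickeMat, Matrix.mul_apply, Fin.sum_univ_two, toSL2R_coe, negI_coe,
      div_mul_eq_mul_div, sqrtN_sq hN, sqrtN_ne hN] <;>
    field_simp [sqrtN_ne hN] <;> rw [sqrtN_sq hN]

lemma Ndvd (γ : CongruenceSubgroup.Gamma0 N) :
    (N : ℤ) ∣ (γ : Matrix.SpecialLinearGroup (Fin 2) ℤ) 1 0 := by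
  have := γ.2
  rwa [CongruenceSubgroup.Gamma0_mem, ZMod.intCast_zmod_eq_zero_iff_dvd] at this

lemma det_entries (A : Matrix.SpecialLinearGroup (Fin 2) ℤ) :
    A 0 0 * A 1 1 - A 0 1 * A 1 0 = 1 := by
  have := A.2
  rwa [Matrix.det_fin_two] at this

/-- Conjugation of `γ ∈ Γ₀(N)` by the Fricke involution, as an element of `Γ₀(N)`. -/
def conj (hN : 1 < N) (γ : CongruenceSubgroup.Gamma0 N) : CongruenceSubgroup.Gamma0 N := by
  set A := (γ : Matrix.SpecialLinearGroup (Fin 2) ℤ)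
  refine ⟨⟨!![A 1 1, -(A 1 0 / N); -(A 0 1 * N), A 0 0], ?_⟩, ?_⟩
  · have h := det_entries A
    have h2 : A 1 0 / N * N = A 1 0 := Int.ediv_mul_cancel (Ndvd γ)
    rw [Matrix.det_fin_two_of]
    linear_combination h - A 0 1 * h2
  · refine CongruenceSubgroup.Gamma0_mem.2 ?_
    show ((-(A 0 1 * N) : ℤ) : ZMod N) = 0
    simp

lemma conj_coe (hN : 1 < N) (γ : CongruenceSubgroup.Gamma0 N) (i j : Fin 2) :
    ((conj hN γ : Matrix.SpecialLinearGroup (Fin 2) ℤ) : Matrix (Fin 2) (Fin 2) ℤ) i j =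
      !![(γ : Matrix.SpecialLinearGroup (Fin 2) ℤ) 1 1,
          -((γ : Matrix.SpecialLinearGroup (Fin 2) ℤ) 1 0 / N);
        -((γ : Matrix.SpecialLinearGroup (Fin 2) ℤ) 0 1 * N),
          (γ : Matrix.SpecialLinearGroup (Fin 2) ℤ) 0 0] i j := rfl

lemma conj_eq (hN : 1 < N) (γ : CongruenceSubgroup.Gamma0 N) :
    W hN * toSL2R γ = toSL2R (conj hN γ) * W hN := by
  apply Subtype.ext
  show (W hN : Matrix (Fin 2) (Fin 2) ℝ) * _ = _ * (W hN : Matrix (Fin 2) (Fin 2) ℝ)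
  obtain ⟨k, hk⟩ := Ndvd γ
  have hkr : ((γ : Matrix.SpecialLinearGroup (Fin 2) ℤ) 1 0 : ℝ) = (N : ℝ) * (k : ℝ) := by
    exact_mod_cast congrArg (fun x : ℤ => (x : ℝ)) hk
  have hdiv : (γ : Matrix.SpecialLinearGroup (Fin 2) ℤ) 1 0 / (N : ℤ) = k := by
    rw [hk]; exact Int.mul_ediv_cancel_left _ (by exact_mod_cast (by omega : N ≠ 0))
  have hN0 : (N : ℝ) ≠ 0 := by exact_mod_cast (by omega : N ≠ 0)
  have hs := sqrtN_sq hN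
  have hs0 := sqrtN_ne hN
  set s := Real.sqrt N with hsdef
  ext i j
  fin_cases i <;> fin_cases j
  all_goals simp [W, frickeMat, Matrix.mul_apply, Fin.sum_univ_two, toSL2R_coe, conj_coe,
    hdiv, hkr, ← hsdef]
  all_goals try push_cast
  all_goals try simp only [← hs]
  all_goals try field_simp
  all_goals try ring

lemma toSL2R_mul (γ δ : CongruenceSubgroup.Gamma0 N) :
    toSL2R ↑(γ * δ) = toSL2R ↑γ * toSL2R ↑δ := by
  rw [Subgroup.coe_mul]; exact _root_.map_mul _ _ _

lemma toSL2R_inv (γ : CongruenceSubgroup.Gamma0 N) :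
    toSL2R ↑(γ⁻¹) = (toSL2R ↑γ)⁻¹ := by
  rw [Subgroup.coe_inv]; exact map_inv toSL2R _

lemma W_mem (hN : 1 < N) : W hN ∈ Gamma0Plus N :=
  Subgroup.subset_closure (Set.mem_union_right _ rfl)

lemma noW (hN : 1 < N) (A : Matrix.SpecialLinearGroup (Fin 2) ℤ) : toSL2R A ≠ W hN := by
  intro h
  have h10 : ((A 1 0 : ℤ) : ℝ) = Real.sqrt N := by
    have := congrArg (fun M : Matrix.SpecialLinearGroup (Fin 2) ℝ =>
      (M : Matrix (Fin 2) (Fin 2) ℝ) 1 0) h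
    simpa [toSL2R_coe, W, frickeMat] using this
  have h01 : ((A 0 1 : ℤ) : ℝ) = -1 / Real.sqrt N := by
    have := congrArg (fun M : Matrix.SpecialLinearGroup (Fin 2) ℝ =>
      (M : Matrix (Fin 2) (Fin 2) ℝ) 0 1) h
    simpa [toSL2R_coe, W, frickeMat] using this
  have hprod : ((A 0 1 * A 1 0 : ℤ) : ℝ) = -1 := by
    push_cast
    rw [h01, h10]
    field_simp
  have hZ : A 0 1 * A 1 0 = -1 := by exact_mod_cast hprod
  have hu : A 1 0 = 1 ∨ A 1 0 = -1 := by
    have : IsUnit (A 1 0) := IsUnit.of_mul_eq_one (-(A 0 1)) (by linarith [hZ, mul_comm (A 0 1) (A 1 0)])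
    exact Int.isUnit_iff.mp this
  have hge : (1 : ℝ) < Real.sqrt N := by
    rw [show (1:ℝ) = Real.sqrt 1 by simp]
    exact Real.sqrt_lt_sqrt (by norm_num) (by exact_mod_cast hN)
  rcases hu with hu | hu <;> rw [hu] at h10 <;> push_cast at h10 <;> linarith

lemma decomp (hN : 1 < N) {g : Matrix.SpecialLinearGroup (Fin 2) ℝ} (hg : g ∈ Gamma0Plus N) :
    (∃ γ : CongruenceSubgroup.Gamma0 N, toSL2R γ = g) ∨
      (∃ γ : CongruenceSubgroup.Gamma0 N, toSL2R γ * W hN = g) := by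
  induction hg using Subgroup.closure_induction with
  | mem x hx =>
    rcases hx with ⟨γ, hγ, rfl⟩ | hx
    · exact Or.inl ⟨⟨γ, hγ⟩, rfl⟩
    · right
      refine ⟨1, ?_⟩
      have : x = W hN := Subtype.ext hx
      simp [this]
  | one => exact Or.inl ⟨1, by simp⟩
  | mul x y _ _ ihx ihy =>
    rcases ihx with ⟨γ, rfl⟩ | ⟨γ, rfl⟩ <;> rcases ihy with ⟨δ, rfl⟩ | ⟨δ, rfl⟩
    · exact Or.inl ⟨γ * δ, by simp⟩
    · exact Or.inr ⟨γ * δ, by simp [mul_assoc]⟩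
    · right
      refine ⟨γ * conj hN δ, ?_⟩
      rw [toSL2R_mul, mul_assoc, mul_assoc, ← conj_eq hN, ← mul_assoc]
    · left
      refine ⟨γ * conj hN δ * negI N, ?_⟩
      rw [toSL2R_mul, toSL2R_mul, ← W_mul_W hN, mul_assoc (toSL2R ↑γ),
        ← mul_assoc (toSL2R ↑(conj hN δ)), ← conj_eq hN]
      group
  | inv x _ ihx =>
    rcases ihx with ⟨γ, rfl⟩ | ⟨γ, rfl⟩
    · exact Or.inl ⟨γ⁻¹, by simp⟩
    · right
      refine ⟨(negI N)⁻¹ * conj hN γ⁻¹, ?_⟩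
      rw [toSL2R_mul, toSL2R_inv, ← W_mul_W hN, mul_assoc, ← conj_eq hN, toSL2R_inv]
      group

/-- The `d`-character `Γ₀(N) →* ℂˣ` attached to `χ`. -/
noncomputable def phi (χ : DirichletCharacter ℂ N) : CongruenceSubgroup.Gamma0 N →* ℂˣ :=
  (MulChar.equivToUnitHom χ).comp (CongruenceSubgroup.Gamma0Map N).toHomUnits

lemma phi_val (χ : DirichletCharacter ℂ N) (γ : CongruenceSubgroup.Gamma0 N) :
    (phi χ γ : ℂ) = χ ((((γ : Matrix.SpecialLinearGroup (Fin 2) ℤ) 1 1 : ℤ)) : ZMod N) := by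
  simp [phi, MulChar.coe_equivToUnitHom, MonoidHom.coe_toHomUnits,
    CongruenceSubgroup.Gamma0Map]

lemma not_left_right (hN : 1 < N) (γ δ : CongruenceSubgroup.Gamma0 N) :
    toSL2R ↑γ ≠ toSL2R ↑δ * W hN := by
  intro h
  apply noW hN ((↑δ : Matrix.SpecialLinearGroup (Fin 2) ℤ)⁻¹ * ↑γ)
  rw [_root_.map_mul, map_inv, h, ← mul_assoc, inv_mul_cancel, one_mul]

open scoped Classical in
noncomputable def F (hN : 1 < N) (χ : DirichletCharacter ℂ N) (ε : ℂˣ) :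
    Matrix.SpecialLinearGroup (Fin 2) ℝ → ℂˣ := fun g =>
  if h : ∃ γ : CongruenceSubgroup.Gamma0 N, toSL2R ↑γ = g then phi χ h.choose
  else if h2 : ∃ γ : CongruenceSubgroup.Gamma0 N, toSL2R ↑γ * W hN = g then
    phi χ h2.choose * ε
  else 1

lemma F_left (hN : 1 < N) (χ : DirichletCharacter ℂ N) (ε : ℂˣ)
    (γ : CongruenceSubgroup.Gamma0 N) : F hN χ ε (toSL2R ↑γ) = phi χ γ := by
  have h : ∃ δ : CongruenceSubgroup.Gamma0 N, toSL2R ↑δ = toSL2R ↑γ := ⟨γ, rfl⟩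
  rw [F]
  rw [dif_pos h]
  congr 1
  exact Subtype.ext (toSL2R_inj h.choose_spec)

lemma F_right (hN : 1 < N) (χ : DirichletCharacter ℂ N) (ε : ℂˣ)
    (γ : CongruenceSubgroup.Gamma0 N) :
    F hN χ ε (toSL2R ↑γ * W hN) = phi χ γ * ε := by
  have h : ¬∃ δ : CongruenceSubgroup.Gamma0 N, toSL2R ↑δ = toSL2R ↑γ * W hN := by
    rintro ⟨δ, hδ⟩
    exact not_left_right hN δ γ hδ
  have h2 : ∃ δ : CongruenceSubgroup.Gamma0 N, toSL2R ↑δ * W hN = toSL2R ↑γ * W hN :=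
    ⟨γ, rfl⟩
  rw [F]
  rw [dif_neg h, dif_pos h2]
  exact congrArg (fun t => phi χ t * ε)
    (Subtype.ext (toSL2R_inj (mul_right_cancel h2.choose_spec)))

/-- The extension of `χ` to `Γ₀⁺(N)` determined by the square root `ε` of `χ(-1)`. -/
noncomputable def mkHom (hN : 1 < N) (χ : DirichletCharacter ℂ N) (ε : ℂˣ)
    (hconj : ∀ γ, phi χ (conj hN γ) = phi χ γ)
    (hε : ε * ε = phi χ (negI N)) : Gamma0Plus N →* ℂˣ where
  toFun g := F hN χ ε ↑g
  map_one' := by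
    show F hN χ ε ↑(1 : Gamma0Plus N) = 1
    have h1 : ((1 : Gamma0Plus N) : Matrix.SpecialLinearGroup (Fin 2) ℝ)
        = toSL2R ↑(1 : CongruenceSubgroup.Gamma0 N) := by simp
    rw [h1, F_left]
    simp
  map_mul' g h := by
    show F hN χ ε ↑(g * h) = F hN χ ε ↑g * F hN χ ε ↑h
    have hgh : ((g * h : Gamma0Plus N) : Matrix.SpecialLinearGroup (Fin 2) ℝ)
        = (↑g : Matrix.SpecialLinearGroup (Fin 2) ℝ) * ↑h := rfl
    rcases decomp hN g.2 with ⟨γ, hγ⟩ | ⟨γ, hγ⟩ <;>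
      rcases decomp hN h.2 with ⟨δ, hδ⟩ | ⟨δ, hδ⟩ <;> rw [hgh, ← hγ, ← hδ]
    · rw [← _root_.map_mul, ← Subgroup.coe_mul, F_left, F_left, F_left, _root_.map_mul]
    · rw [← mul_assoc, ← toSL2R_mul, F_left, F_right, F_right, _root_.map_mul, mul_assoc]
    · rw [mul_assoc, conj_eq hN, ← mul_assoc, ← toSL2R_mul, F_right, F_right, F_left,
        _root_.map_mul, hconj]
      simp [mul_comm, mul_assoc, mul_left_comm]
    · have key : toSL2R ↑γ * W hN * (toSL2R ↑δ * W hN)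
          = toSL2R ↑(γ * conj hN δ * negI N) := by
        rw [toSL2R_mul, toSL2R_mul, ← W_mul_W hN, mul_assoc (toSL2R ↑γ),
          ← mul_assoc (W hN), conj_eq hN]
        group
      rw [key, F_left, F_right, F_right, _root_.map_mul, _root_.map_mul, hconj, ← hε]
      simp [mul_comm, mul_assoc, mul_left_comm]

lemma ad_one (γ : CongruenceSubgroup.Gamma0 N) :
    (((γ : Matrix.SpecialLinearGroup (Fin 2) ℤ) 0 0 : ℤ) : ZMod N) *
      (((γ : Matrix.SpecialLinearGroup (Fin 2) ℤ) 1 1 : ℤ) : ZMod N) = 1 := by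
  have h := det_entries (γ : Matrix.SpecialLinearGroup (Fin 2) ℤ)
  have h2 : ((((γ : Matrix.SpecialLinearGroup (Fin 2) ℤ) 0 0 * (γ : Matrix.SpecialLinearGroup (Fin 2) ℤ) 1 1 - (γ : Matrix.SpecialLinearGroup (Fin 2) ℤ) 0 1 * (γ : Matrix.SpecialLinearGroup (Fin 2) ℤ) 1 0 : ℤ)) : ZMod N) = 1 := by
    rw [h]; simp
  have h3 := γ.2
  rw [CongruenceSubgroup.Gamma0_mem] at h3
  push_cast at h2
  rw [h3] at h2
  simpa using h2

lemma isUnit_d (γ : CongruenceSubgroup.Gamma0 N) :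
    IsUnit ((((γ : Matrix.SpecialLinearGroup (Fin 2) ℤ) 1 1 : ℤ)) : ZMod N) :=
  IsUnit.of_mul_eq_one _ (by rw [mul_comm]; exact ad_one γ)

lemma phi_conj_mul (hN : 1 < N) (χ : DirichletCharacter ℂ N)
    (γ : CongruenceSubgroup.Gamma0 N) :
    phi χ (conj hN γ) * phi χ γ = 1 := by
  apply Units.ext
  push_cast
  rw [phi_val, phi_val]
  have : ((conj hN γ : Matrix.SpecialLinearGroup (Fin 2) ℤ)) 1 1
      = (γ : Matrix.SpecialLinearGroup (Fin 2) ℤ) 0 0 := rfl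
  rw [this, ← _root_.map_mul, ad_one γ, MulChar.map_one]

lemma phi_sq (hN : 1 < N) {χ : DirichletCharacter ℂ N} (hχ2 : χ ^ 2 = 1)
    (γ : CongruenceSubgroup.Gamma0 N) : phi χ γ * phi χ γ = 1 := by
  apply Units.ext
  push_cast
  rw [phi_val]
  have h := congrArg (fun ψ : DirichletCharacter ℂ N =>
    ψ ((((γ : Matrix.SpecialLinearGroup (Fin 2) ℤ) 1 1 : ℤ)) : ZMod N)) hχ2
  simp only [pow_two, MulChar.mul_apply] at h
  rw [h, MulChar.one_apply (isUnit_d γ)]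

lemma phi_conj (hN : 1 < N) {χ : DirichletCharacter ℂ N} (hχ2 : χ ^ 2 = 1)
    (γ : CongruenceSubgroup.Gamma0 N) : phi χ (conj hN γ) = phi χ γ := by
  have h1 := phi_conj_mul hN χ γ
  have h2 := phi_sq hN hχ2 γ
  calc phi χ (conj hN γ) = phi χ (conj hN γ) * (phi χ γ * phi χ γ) := by rw [h2, mul_one]
    _ = (phi χ (conj hN γ) * phi χ γ) * phi χ γ := by rw [mul_assoc]
    _ = phi χ γ := by rw [h1, one_mul]

/-- A lift of a unit `u` mod `N` to `Γ₀(N)` with lower-right entry congruent to `u`. -/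
def liftUnit (hN : 1 < N) (u : (ZMod N)ˣ) : CongruenceSubgroup.Gamma0 N := by
  haveI : NeZero N := ⟨by omega⟩
  set a₀ : ℤ := (((u⁻¹ : (ZMod N)ˣ) : ZMod N).val : ℤ)
  set d₀ : ℤ := (((u : (ZMod N)ˣ) : ZMod N).val : ℤ)
  have hdvd : (N : ℤ) ∣ a₀ * d₀ - 1 := by
    rw [← ZMod.intCast_zmod_eq_zero_iff_dvd]
    push_cast
    simp only [a₀, d₀]
    push_cast
    rw [ZMod.natCast_val, ZMod.natCast_val, ZMod.cast_id, ZMod.cast_id]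
    simp
  refine ⟨⟨!![a₀, (a₀ * d₀ - 1) / N; (N : ℤ), d₀], ?_⟩, ?_⟩
  · rw [Matrix.det_fin_two_of]
    have := Int.ediv_mul_cancel hdvd
    linarith [this]
  · refine CongruenceSubgroup.Gamma0_mem.2 ?_
    show (((!![a₀, (a₀ * d₀ - 1) / N; (N : ℤ), d₀] : Matrix (Fin 2) (Fin 2) ℤ) 1 0 : ℤ) : ZMod N) = 0
    simp

lemma liftUnit_d (hN : 1 < N) (u : (ZMod N)ˣ) :
    ((((liftUnit hN u : Matrix.SpecialLinearGroup (Fin 2) ℤ) 1 1 : ℤ)) : ZMod N) = (u : ZMod N) := by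
  haveI : NeZero N := ⟨by omega⟩
  show (((((u : (ZMod N)ˣ) : ZMod N).val : ℤ) : ZMod N)) = (u : ZMod N)
  push_cast
  rw [ZMod.natCast_val, ZMod.cast_id]

lemma liftUnit_a (hN : 1 < N) (u : (ZMod N)ˣ) :
    ((((liftUnit hN u : Matrix.SpecialLinearGroup (Fin 2) ℤ) 0 0 : ℤ)) : ZMod N) = ((u⁻¹ : (ZMod N)ˣ) : ZMod N) := by
  haveI : NeZero N := ⟨by omega⟩
  show (((((u⁻¹ : (ZMod N)ˣ) : ZMod N).val : ℤ) : ZMod N)) = ((u⁻¹ : (ZMod N)ˣ) : ZMod N)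
  push_cast
  rw [ZMod.natCast_val, ZMod.cast_id]

/-- For any extension `χp` of `χ`, the value of `χ` at the `(0,0)` entry equals the value
at the `(1,1)` entry (Fricke conjugation symmetry). -/
lemma ext_conj_symm (hN : 1 < N) {χ : DirichletCharacter ℂ N} {χp : Gamma0Plus N →* ℂˣ}
    (hext : ExtendsPlus N χ χp) (γ : CongruenceSubgroup.Gamma0 N) :
    χ ((((γ : Matrix.SpecialLinearGroup (Fin 2) ℤ) 0 0 : ℤ)) : ZMod N) =
      χ ((((γ : Matrix.SpecialLinearGroup (Fin 2) ℤ) 1 1 : ℤ)) : ZMod N) := by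
  set w : Gamma0Plus N := ⟨W hN, W_mem hN⟩
  set g : Gamma0Plus N := ⟨toSL2R ↑γ, toSL2R_mem_Gamma0Plus N γ⟩
  set cg : Gamma0Plus N := ⟨toSL2R ↑(conj hN γ), toSL2R_mem_Gamma0Plus N (conj hN γ)⟩
  have hrel : cg * w = w * g := Subtype.ext (conj_eq hN γ).symm
  have h2 : χp cg * χp w = χp w * χp g := by
    rw [← _root_.map_mul, ← _root_.map_mul, hrel]
  have h3 : χp cg = χp g := by
    rw [mul_comm (χp w) (χp g)] at h2
    exact mul_right_cancel h2
  have h4 := hext (conj hN γ)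
  have h5 := hext γ
  have hcc : ((conj hN γ : Matrix.SpecialLinearGroup (Fin 2) ℤ)) 1 1
      = (γ : Matrix.SpecialLinearGroup (Fin 2) ℤ) 0 0 := rfl
  rw [hcc] at h4
  rw [← h4, ← h5]
  exact_mod_cast congrArg (fun x : ℂˣ => (x : ℂ)) h3

lemma exists_imp_sq_one (hN : 1 < N) {χ : DirichletCharacter ℂ N}
    (h : ∃ χplus : Gamma0Plus N →* ℂˣ, ExtendsPlus N χ χplus) : χ ^ 2 = 1 := by
  obtain ⟨χp, hext⟩ := h
  apply MulChar.ext
  intro u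
  have h1 := ext_conj_symm hN hext (liftUnit hN u)
  rw [liftUnit_d hN u, liftUnit_a hN u] at h1
  have h2 : χ ((u⁻¹ : (ZMod N)ˣ) : ZMod N) * χ ((u : (ZMod N)ˣ) : ZMod N) = 1 := by
    rw [← _root_.map_mul]
    norm_cast
    simp
  simp only [pow_two, MulChar.mul_apply, MulChar.one_apply_coe]
  nth_rewrite 1 [← h1]
  exact h2


lemma mkHom_extends (hN : 1 < N) (χ : DirichletCharacter ℂ N) (ε : ℂˣ)
    (hconj : ∀ γ, phi χ (conj hN γ) = phi χ γ) (hε : ε * ε = phi χ (negI N)) :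
    ExtendsPlus N χ (mkHom hN χ ε hconj hε) := by
  intro γ
  show (F hN χ ε (toSL2R ↑γ) : ℂ) = _
  rw [F_left, phi_val]

lemma mkHom_w (hN : 1 < N) (χ : DirichletCharacter ℂ N) (ε : ℂˣ)
    (hconj : ∀ γ, phi χ (conj hN γ) = phi χ γ) (hε : ε * ε = phi χ (negI N)) :
    mkHom hN χ ε hconj hε ⟨W hN, W_mem hN⟩ = ε := by
  show F hN χ ε (W hN) = ε
  have h : W hN = toSL2R ↑(1 : CongruenceSubgroup.Gamma0 N) * W hN := by simp
  rw [h, F_right]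
  simp

lemma eq_of_w_eq (hN : 1 < N) {χ : DirichletCharacter ℂ N}
    {χp χp' : Gamma0Plus N →* ℂˣ} (h : ExtendsPlus N χ χp) (h' : ExtendsPlus N χ χp')
    (hw : χp ⟨W hN, W_mem hN⟩ = χp' ⟨W hN, W_mem hN⟩) : χp = χp' := by
  ext x
  rcases decomp hN x.2 with ⟨γ, hγ⟩ | ⟨γ, hγ⟩
  · have hx : x = ⟨toSL2R ↑γ, toSL2R_mem_Gamma0Plus N γ⟩ := Subtype.ext hγ.symm
    rw [hx]
    exact congrArg Units.val (Units.ext (by rw [h γ, h' γ]))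
  · have hx : x = (⟨toSL2R ↑γ, toSL2R_mem_Gamma0Plus N γ⟩ : Gamma0Plus N)
        * ⟨W hN, W_mem hN⟩ := Subtype.ext hγ.symm
    rw [hx, _root_.map_mul, _root_.map_mul, hw]
    have : χp ⟨toSL2R ↑γ, toSL2R_mem_Gamma0Plus N γ⟩
        = χp' ⟨toSL2R ↑γ, toSL2R_mem_Gamma0Plus N γ⟩ := Units.ext (by rw [h γ, h' γ])
    rw [this]

lemma exists_eps (hN : 1 < N) (χ : DirichletCharacter ℂ N) :
    ∃ ε : ℂˣ, ε * ε = phi χ (negI N) := by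
  obtain ⟨z, hz⟩ := IsAlgClosed.exists_pow_nat_eq ((phi χ (negI N) : ℂˣ) : ℂ) (n := 2)
    (by norm_num)
  have hz0 : z ≠ 0 := by
    intro h0
    rw [h0] at hz
    simp only [ne_eq, pow_two, zero_mul, mul_zero] at hz
    exact (Units.ne_zero _) hz.symm
  refine ⟨Units.mk0 z hz0, Units.ext ?_⟩
  push_cast
  rw [← pow_two]
  exact hz

end Stmt6Aux

open Stmt6Aux in
theorem stmt6 (N : ℕ) (hN : 1 < N) (χ : DirichletCharacter ℂ N) :
    ((∃ χplus : Gamma0Plus N →* ℂˣ, ExtendsPlus N χ χplus) ↔ χ ^ 2 = 1) ∧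
    (χ ^ 2 = 1 → {χplus : Gamma0Plus N →* ℂˣ | ExtendsPlus N χ χplus}.ncard = 2) := by
  constructor
  · constructor
    · exact exists_imp_sq_one hN
    · intro hχ2
      obtain ⟨ε, hε⟩ := exists_eps hN χ
      exact ⟨mkHom hN χ ε (phi_conj hN hχ2) hε, mkHom_extends hN χ ε (phi_conj hN hχ2) hε⟩
  · intro hχ2
    obtain ⟨ε, hε⟩ := exists_eps hN χ
    have hconj := phi_conj hN hχ2
    have hεneg : (-ε) * (-ε) = phi χ (negI N) := by rw [neg_mul_neg]; exact hε
    have hset : {χplus : Gamma0Plus N →* ℂˣ | ExtendsPlus N χ χplus}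
        = {mkHom hN χ ε hconj hε, mkHom hN χ (-ε) hconj hεneg} := by
      ext χp
      simp only [Set.mem_setOf_eq, Set.mem_insert_iff, Set.mem_singleton_iff]
      constructor
      · intro hp
        have hww : (⟨W hN, W_mem hN⟩ : Gamma0Plus N) * ⟨W hN, W_mem hN⟩
            = ⟨toSL2R ↑(negI N), toSL2R_mem_Gamma0Plus N (negI N)⟩ :=
          Subtype.ext (W_mul_W hN)
        have h1 : χp ⟨W hN, W_mem hN⟩ * χp ⟨W hN, W_mem hN⟩ = phi χ (negI N) := by
          rw [← _root_.map_mul, hww]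
          exact Units.ext (by rw [hp (negI N), phi_val])
        set w := χp ⟨W hN, W_mem hN⟩ with hwdef
        have hv : (w : ℂ) * (w : ℂ) = (ε : ℂ) * (ε : ℂ) := by
          rw [← Units.val_mul, ← Units.val_mul, h1, hε]
        have h2 : ((w : ℂ) - ε) * ((w : ℂ) + ε) = 0 := by linear_combination hv
        rcases mul_eq_zero.mp h2 with hcase | hcase
        · left
          refine eq_of_w_eq hN hp (mkHom_extends hN χ ε hconj hε) ?_
          rw [mkHom_w]
          exact Units.ext (sub_eq_zero.mp hcase)
        · right
          refine eq_of_w_eq hN hp (mkHom_extends hN χ (-ε) hconj hεneg) ?_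
          rw [mkHom_w]
          refine Units.ext ?_
          rw [Units.val_neg]
          exact eq_neg_of_add_eq_zero_left hcase
      · rintro (rfl | rfl)
        · exact mkHom_extends hN χ ε hconj hε
        · exact mkHom_extends hN χ (-ε) hconj hεneg
    rw [hset, Set.ncard_pair]
    intro hcontra
    have := congrArg (fun f : Gamma0Plus N →* ℂˣ => f ⟨W hN, W_mem hN⟩) hcontra
    rw [mkHom_w, mkHom_w] at this
    have hval : (ε : ℂ) = -(ε : ℂ) := by
      have := congrArg Units.val this
      rwa [Units.val_neg] at this
    have : (ε : ℂ) = 0 := by linear_combination hval / 2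
    exact Units.ne_zero ε this
end

section
/- Let N be an odd squarefree positive integer and let e be a positive divisor of N. Then the number of integers ϱ with 0 ≤ ϱ < 2N and ϱ² ≡ −4e (mod 4N) equals the product over the primes p dividing N/e of (1 + (−4e | p)), where (· | p) denotes the Legendre symbol modulo p. -/
open Finset

lemma even_of_mem (N e : ℕ) (ϱ : ℕ) (h2 : (4 * (N : ℤ)) ∣ ((ϱ : ℤ) ^ 2 + 4 * (e : ℤ))) :
    2 ∣ ϱ := by
  have h4 : (4:ℤ) ∣ (ϱ:ℤ)^2 := by
    have : (4:ℤ) ∣ (ϱ:ℤ)^2 + 4*e := dvd_trans ⟨(N:ℤ), rfl⟩ h2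
    omega
  rcases Nat.even_or_odd ϱ with h | h
  · exact h.two_dvd
  · exfalso
    obtain ⟨k, hk⟩ := h
    subst hk
    push_cast at h4
    have : ((2:ℤ)*k+1)^2 = 4*(k^2+k)+1 := by ring
    omega

-- step 1: even reduction
lemma step1 (N e : ℕ) :
    ((Finset.range (2 * N)).filter
        (fun ϱ : ℕ => (4 * (N : ℤ)) ∣ ((ϱ : ℤ) ^ 2 + 4 * (e : ℤ)))).card
    = ((Finset.range N).filter
        (fun σ : ℕ => ((N : ℤ)) ∣ ((σ : ℤ) ^ 2 + (e : ℤ)))).card := by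
  symm
  refine Finset.card_bij' (fun σ _ => 2 * σ) (fun ϱ _ => ϱ / 2) ?_ ?_ ?_ ?_
  · intro σ hσ
    simp only [mem_filter, mem_range] at hσ ⊢
    obtain ⟨h1, h2⟩ := hσ
    refine ⟨by omega, ?_⟩
    push_cast
    have : ((2:ℤ) * σ) ^ 2 + 4 * e = 4 * (σ ^ 2 + e) := by ring
    rw [this]
    exact mul_dvd_mul_left 4 h2
  · intro ϱ hϱ
    simp only [mem_filter, mem_range] at hϱ ⊢
    obtain ⟨h1, h2⟩ := hϱ
    obtain ⟨k, hk⟩ := even_of_mem N e ϱ h2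
    subst hk
    rw [Nat.mul_div_cancel_left _ (by norm_num)]
    refine ⟨by omega, ?_⟩
    push_cast at h2 ⊢
    have : ((2:ℤ) * k) ^ 2 + 4 * e = 4 * (k ^ 2 + e) := by ring
    rw [this] at h2
    exact (mul_dvd_mul_iff_left (by norm_num : (4:ℤ) ≠ 0)).mp h2
  · intro σ _; omega
  · intro ϱ hϱ
    simp only [mem_filter, mem_range] at hϱ
    obtain ⟨k, hk⟩ := even_of_mem N e ϱ hϱ.2
    omega

-- step 2: to ZMod
lemma step2 (N : ℕ) [NeZero N] (e : ℤ) :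
    ((Finset.range N).filter
        (fun σ : ℕ => ((N : ℤ)) ∣ ((σ : ℤ) ^ 2 + e))).card
    = Fintype.card {x : ZMod N // x ^ 2 = ((-e : ℤ) : ZMod N)} := by
  rw [Fintype.card_subtype]
  refine Finset.card_bij (fun σ _ => (σ : ZMod N)) ?_ ?_ ?_
  · intro σ hσ
    simp only [mem_filter, mem_range, mem_univ, true_and] at hσ ⊢
    obtain ⟨_, h2⟩ := hσ
    have := (ZMod.intCast_zmod_eq_zero_iff_dvd ((σ:ℤ)^2 + e) N).mpr h2
    push_cast at this ⊢
    linear_combination this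
  · intro σ hσ τ hτ h
    simp only [mem_filter, mem_range] at hσ hτ
    have := congrArg ZMod.val h
    rwa [ZMod.val_cast_of_lt hσ.1, ZMod.val_cast_of_lt hτ.1] at this
  · intro x hx
    simp only [mem_filter, mem_univ, true_and] at hx
    refine ⟨x.val, ?_, ?_⟩
    · simp only [mem_filter, mem_range]
      refine ⟨ZMod.val_lt x, ?_⟩
      rw [← ZMod.intCast_zmod_eq_zero_iff_dvd]
      push_cast
      rw [ZMod.natCast_val, ZMod.cast_id]
      push_cast at hx
      linear_combination hx
    · simp [ZMod.natCast_val, ZMod.cast_id]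


-- step 3: multiplicativity over prime factors
lemma step3 (N : ℕ) (hsf : Squarefree N) (a : ℤ) :
    Nat.card {x : ZMod N // x ^ 2 = (a : ZMod N)}
    = ∏ p ∈ N.primeFactors, Nat.card {x : ZMod p // x ^ 2 = (a : ZMod p)} := by
  haveI : NeZero N := ⟨hsf.ne_zero⟩
  haveI inst : ∀ i : {p // p ∈ N.primeFactors}, NeZero ((i : ℕ)) :=
    fun i => ⟨(Nat.prime_of_mem_primeFactors i.2).pos.ne'⟩
  have hc : Pairwise (Function.onFun Nat.Coprime fun i : {p // p ∈ N.primeFactors} => (i : ℕ)) := by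
    intro i j hij
    exact (Nat.coprime_primes (Nat.prime_of_mem_primeFactors i.2)
      (Nat.prime_of_mem_primeFactors j.2)).mpr (fun h => hij (Subtype.ext h))
  have key : N = ∏ i : {p // p ∈ N.primeFactors}, (i : ℕ) := by
    rw [Finset.prod_coe_sort N.primeFactors (fun p => p)]
    exact (Nat.prod_primeFactors_of_squarefree hsf).symm
  let E : ZMod N ≃+* Π i : {p // p ∈ N.primeFactors}, ZMod (i : ℕ) :=
    (ZMod.ringEquivCongr key).trans (ZMod.prodEquivPi _ hc)
  have h1 : ∀ x : ZMod N, x ^ 2 = (a : ZMod N) ↔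
      ∀ i : {p // p ∈ N.primeFactors}, (E x i) ^ 2 = (a : ZMod (i : ℕ)) := by
    intro x
    rw [← E.injective.eq_iff, map_pow, map_intCast, funext_iff]
    simp [Pi.pow_apply]
  calc Nat.card {x : ZMod N // x ^ 2 = (a : ZMod N)}
      = Nat.card (Π i : {p // p ∈ N.primeFactors},
          {b : ZMod (i : ℕ) // b ^ 2 = (a : ZMod (i : ℕ))}) := by
        refine Nat.card_congr ?_
        exact (Equiv.subtypeEquiv E.toEquiv h1).trans (Equiv.subtypePiEquivPi)
    _ = ∏ i : {p // p ∈ N.primeFactors},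
          Nat.card {b : ZMod (i : ℕ) // b ^ 2 = (a : ZMod (i : ℕ))} := Nat.card_pi
    _ = ∏ p ∈ N.primeFactors, Nat.card {x : ZMod p // x ^ 2 = (a : ZMod p)} :=
        Finset.prod_coe_sort N.primeFactors
          (fun p => Nat.card {x : ZMod p // x ^ 2 = (a : ZMod p)})

-- local count at primes dividing e
lemma card_p_dvd (p : ℕ) (hp : p.Prime) (a : ℤ) (ha : (a : ZMod p) = 0) :
    Nat.card {x : ZMod p // x ^ 2 = (a : ZMod p)} = 1 := by
  haveI := Fact.mk hp
  calc Nat.card {x : ZMod p // x ^ 2 = (a : ZMod p)}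
      = Nat.card {x : ZMod p // x = 0} := Nat.card_congr (Equiv.subtypeEquivRight
          (fun x => by rw [ha, sq_eq_zero_iff]))
    _ = 1 := by rw [Nat.card_eq_fintype_card, Fintype.card_subtype_eq]

-- local count at odd primes
lemma card_p_ndvd (p : ℕ) [Fact p.Prime] (hp2 : p ≠ 2) (a : ℤ) :
    (Nat.card {x : ZMod p // x ^ 2 = (a : ZMod p)} : ℤ) = 1 + legendreSym p a := by
  have h1 : Nat.card {x : ZMod p // x ^ 2 = (a : ZMod p)}
      = {x : ZMod p | x ^ 2 = (a : ZMod p)}.toFinset.card := by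
    rw [Set.toFinset_card, Nat.card_eq_fintype_card]
    rfl
  rw [h1, legendreSym.card_sqrts p hp2 a, add_comm]

lemma jac_eq (p : ℕ) [Fact p.Prime] (hp2 : p ≠ 2) (e : ℕ) :
    jacobiSym (-(4 * (e : ℤ))) p = legendreSym p (-(e : ℤ)) := by
  have hp := Fact.out (p := p.Prime)
  rw [← jacobiSym.legendreSym.to_jacobiSym]
  have h3 : ((2 : ℤ) : ZMod p) ≠ 0 := by
    rw [Ne, ZMod.intCast_zmod_eq_zero_iff_dvd]
    intro h
    have : p ∣ 2 := by exact_mod_cast h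
    exact hp2 ((Nat.prime_dvd_prime_iff_eq hp Nat.prime_two).mp this)
  have h4 : legendreSym p 2 * legendreSym p 2 = 1 := by
    have := legendreSym.sq_one p h3
    rwa [sq] at this
  have h2 : (-(4 * (e : ℤ))) = 2 * (2 * (-(e : ℤ))) := by ring
  rw [h2, legendreSym.mul, legendreSym.mul, ← mul_assoc, h4, one_mul]

theorem stmt10 (N e : ℕ) (hN : 0 < N) (hodd : Odd N) (hsf : Squarefree N)
    (he : e ∣ N) :
    (((Finset.range (2 * N)).filter
        (fun ϱ : ℕ => (4 * (N : ℤ)) ∣ ((ϱ : ℤ) ^ 2 + 4 * (e : ℤ)))).card : ℤ)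
      = ∏ p ∈ (N / e).primeFactors, (1 + jacobiSym (-(4 * (e : ℤ))) p) := by
  haveI : NeZero N := ⟨hN.ne'⟩
  rw [step1, step2 N (e : ℤ)]
  rw [← Nat.card_eq_fintype_card, step3 N hsf (-(e : ℤ))]
  have hNe : N = e * (N / e) := (Nat.mul_div_cancel' he).symm
  have hco : Nat.Coprime e (N / e) := Nat.coprime_of_squarefree_mul (by rw [← hNe]; exact hsf)
  have hpf : N.primeFactors = e.primeFactors ∪ (N / e).primeFactors := by
    conv_lhs => rw [hNe]
    exact hco.primeFactors_mul
  rw [hpf, Finset.prod_union hco.disjoint_primeFactors, Nat.cast_mul, Nat.cast_prod,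
    Nat.cast_prod]
  refine Eq.trans (congrArg₂ (· * ·)
    (Finset.prod_eq_one fun p hp => ?_) (Finset.prod_congr rfl fun p hp => ?_)) (one_mul _)
  · have hpP := Nat.prime_of_mem_primeFactors hp
    have ha : ((-(e : ℤ) : ℤ) : ZMod p) = 0 := by
      have h0 : ((e : ℕ) : ZMod p) = 0 :=
        (ZMod.natCast_eq_zero_iff e p).mpr (Nat.dvd_of_mem_primeFactors hp)
      push_cast
      rw [h0, neg_zero]
    rw [card_p_dvd p hpP (-(e : ℤ)) ha]
    norm_num
  · have hpP := Nat.prime_of_mem_primeFactors hp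
    have hp2 : p ≠ 2 := by
      intro h
      subst h
      have : 2 ∣ N := dvd_trans (Nat.dvd_of_mem_primeFactors hp) (Nat.div_dvd_of_dvd he)
      rcases hodd with ⟨k, hk⟩
      omega
    haveI := Fact.mk hpP
    rw [jac_eq p hp2 e]
    exact card_p_ndvd p hp2 (-(e : ℤ))
end
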